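/- Let N be a positive integer such that n = φ(N) is even (φ is Euler's totient function), and let (a,b,c) be an ABC-solution. If (A,B,C) = Θ_n(a,b,c), then N divides A·B·C. -/

import Mathlib

/-- An ABC-solution: distinct, pairwise coprime integers with a+b+c = 0, a < 0, b < 0. -/
def IsABCSolution (a b c : ℤ) : Prop :=
  a + b + c = 0 ∧ a < 0 ∧ b < 0 ∧
  a ≠ b ∧ b ≠ c ∧ a ≠ c ∧
  IsCoprime a b ∧ IsCoprime b c ∧ IsCoprime a c

/-- The radical of a natural number: the product of its distinct prime factors. -/
def rad (n : ℕ) : ℕ := ∏ p ∈ n.primeFactors, p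

/-- The quality function f((a,b,c),ε) = log c − (1+ε)·log rad(|a·b·c|). -/
noncomputable def fABC (a b c : ℤ) (ε : ℝ) : ℝ :=
  Real.log (c : ℝ) - (1 + ε) * Real.log (rad (a * b * c).natAbs : ℝ)

/-- The operation Θ_n on ABC-solutions, with m = n if c is even and m = 0 otherwise.
The divisions are exact integer divisions. -/
def theta (n : ℕ) (a b c : ℤ) : ℤ × ℤ × ℤ :=
  let m : ℕ := if 2 ∣ c then n else 0
  (-((a - b) ^ n / 2 ^ m), -((c ^ n - (a - b) ^ n) / 2 ^ m), c ^ n / 2 ^ m)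

/-- If an integer is not divisible by a prime p, its n-th power is 1 mod p^k
whenever φ(p^k) ∣ n. -/
lemma pow_eq_one_zmod {p k : ℕ} (hp : p.Prime) {z : ℤ} (hz : ¬ (p : ℤ) ∣ z)
    {n : ℕ} (hd : (p ^ k).totient ∣ n) : ((z : ZMod (p ^ k))) ^ n = 1 := by
  have hcop : IsCoprime ((p : ℤ) ^ k) z :=
    ((Nat.prime_iff_prime_int.mp hp).coprime_iff_not_dvd.mpr hz).pow_left
  obtain ⟨u, v, huv⟩ := hcop
  have hq : ((p ^ k : ℕ) : ZMod (p ^ k)) = 0 := ZMod.natCast_self _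
  have hunit : IsUnit ((z : ℤ) : ZMod (p ^ k)) := by
    refine IsUnit.of_mul_eq_one ((v : ℤ) : ZMod (p ^ k)) ?_
    have : ((u * p ^ k + v * z : ℤ) : ZMod (p ^ k)) = ((1 : ℤ) : ZMod (p ^ k)) := by
      rw [huv]
    push_cast at this ⊢
    rw [show ((p : ZMod (p ^ k)) ^ k) = 0 by push_cast at hq; exact hq] at this
    linear_combination this
  obtain ⟨w, hw⟩ := hunit
  have h1 : w ^ (p ^ k).totient = 1 := ZMod.pow_totient w
  obtain ⟨e, he⟩ := hd
  calc ((z : ℤ) : ZMod (p ^ k)) ^ n = ((w : ZMod (p ^ k)) ^ (p ^ k).totient) ^ e := by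
        rw [hw, ← pow_mul, he]
    _ = 1 := by
        rw [show ((w : ZMod (p ^ k)) ^ (p ^ k).totient) = ((w ^ (p ^ k).totient : (ZMod (p ^ k))ˣ) : ZMod (p ^ k)) by push_cast; ring, h1]
        simp

/-- Key lemma: N divides xⁿ (yⁿ − xⁿ) yⁿ for n = φ(N). -/
lemma key_dvd (N : ℕ) (hN : 0 < N) (x y : ℤ) :
    (N : ℤ) ∣ x ^ N.totient * (y ^ N.totient - x ^ N.totient) * y ^ N.totient := by
  set n := N.totient with hn
  set P : ℤ := x ^ n * (y ^ n - x ^ n) * y ^ n with hP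
  rw [Int.natCast_dvd]
  rw [Nat.dvd_iff_prime_pow_dvd_dvd]
  intro p k hp hpk
  rw [← Int.natCast_dvd]
  have hpnat : p.Prime := hp
  -- totient p^k divides n
  have htd : (p ^ k).totient ∣ n := Nat.totient_dvd_of_dvd hpk
  have hn0 : 0 < n := Nat.totient_pos.mpr hN
  have hkn : k ≤ n := by
    rcases Nat.eq_zero_or_pos k with rfl | hk0
    · exact Nat.zero_le _
    have h1 : k ≤ (p ^ k).totient := by
      rw [Nat.totient_prime_pow hpnat hk0]
      calc k = (k - 1) + 1 := by omega
        _ ≤ 2 ^ (k - 1) := Nat.succ_le_of_lt Nat.lt_two_pow_self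
        _ ≤ p ^ (k - 1) * 1 := by
            rw [mul_one]; exact Nat.pow_le_pow_left hpnat.two_le _
        _ ≤ p ^ (k - 1) * (p - 1) := by
            exact Nat.mul_le_mul_left _ (by have := hpnat.two_le; omega)
    exact h1.trans (Nat.le_of_dvd hn0 htd)
  push_cast
  by_cases hx : (p : ℤ) ∣ x
  · have : (p : ℤ) ^ k ∣ x ^ n :=
      (pow_dvd_pow_of_dvd hx k).trans (pow_dvd_pow x hkn)
    exact dvd_mul_of_dvd_left (dvd_mul_of_dvd_left this _) _
  by_cases hy : (p : ℤ) ∣ y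
  · have : (p : ℤ) ^ k ∣ y ^ n :=
      (pow_dvd_pow_of_dvd hy k).trans (pow_dvd_pow y hkn)
    exact Dvd.dvd.mul_left this _
  · have hmid : ((p : ℤ) ^ k) ∣ (y ^ n - x ^ n) := by
      have := (ZMod.intCast_zmod_eq_zero_iff_dvd (y ^ n - x ^ n) (p ^ k)).mp ?_
      · push_cast at this; exact this
      push_cast
      rw [pow_eq_one_zmod hpnat hx htd, pow_eq_one_zmod hpnat hy htd, sub_self]
    exact dvd_mul_of_dvd_left (Dvd.dvd.mul_left hmid _) _

/-- if n = φ(N) is even and (A,B,C) = Θ_n(a,b,c), then N ∣ A·B·C. -/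
theorem N_dvd_theta (N : ℕ) (hN : 0 < N) (hev : Even N.totient)
    (a b c : ℤ) (h : IsABCSolution a b c) :
    (N : ℤ) ∣ (theta N.totient a b c).1 * (theta N.totient a b c).2.1 *
      (theta N.totient a b c).2.2 := by
  set n := N.totient with hn
  by_cases hc : 2 ∣ c
  · -- c even : a - b is even too (a - b ≡ a + b = -c mod 2)
    have hab : 2 ∣ (a - b) := by
      have h1 : a + b + c = 0 := h.1
      omega
    obtain ⟨d', hd'⟩ := hab
    obtain ⟨c', hc'⟩ := id hc
    have h2n : (2 : ℤ) ^ n ≠ 0 := pow_ne_zero _ two_ne_zero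
    simp only [theta]
    rw [if_pos hc, hd', hc', mul_pow, mul_pow, Int.mul_ediv_cancel_left _ h2n,
      Int.mul_ediv_cancel_left _ h2n, ← mul_sub, Int.mul_ediv_cancel_left _ h2n]
    have := key_dvd N hN d' c'
    rw [← hn] at this
    calc (N : ℤ) ∣ d' ^ n * (c' ^ n - d' ^ n) * c' ^ n := this
      _ = -(d' ^ n) * -(c' ^ n - d' ^ n) * c' ^ n := by ring
  · simp only [theta]
    rw [if_neg hc]
    simp only [pow_zero, Int.ediv_one]
    have := key_dvd N hN (a - b) c
    rw [← hn] at this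
    calc (N : ℤ) ∣ (a - b) ^ n * (c ^ n - (a - b) ^ n) * c ^ n := this
      _ = -((a - b) ^ n) * -(c ^ n - (a - b) ^ n) * c ^ n := by ring
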